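/- Let $\phi_{HF+}(\mathbf{z}) = \frac{1}{\sqrt{r}}\exp(-\|\mathbf{z}\|^2/2)\,\prod_{i=1}^{r/2}\left(\exp(\omega_i^\top\mathbf{z}), \exp(-\omega_i^\top\mathbf{z})\right)$ (concatenation), with i.i.d. $\omega_i \sim \mathcal{N}(0, I_N)$ and $r$ even. Then $\mathbb{E}[\phi_{HF+}(\mathbf{x})^\top \phi_{HF+}(\mathbf{y})] = \exp(\mathbf{x}^\top \mathbf{y})$ for all $\mathbf{x}, \mathbf{y} \in \mathbb{R}^N$. -/

import Mathlib

open MeasureTheory ProbabilityTheory Real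
open scoped NNReal ENNReal

lemma gaussPDF_mul_exp (t x : ℝ) :
    gaussianPDFReal 0 1 x * Real.exp (t * x) =
      Real.exp (t ^ 2 / 2) * gaussianPDFReal t 1 x := by
  have h : Real.exp (-(x - 0) ^ 2 / (2 * ((1:ℝ≥0):ℝ))) * Real.exp (t * x)
      = Real.exp (t ^ 2 / 2) * Real.exp (-(x - t) ^ 2 / (2 * ((1:ℝ≥0):ℝ))) := by
    rw [← Real.exp_add, ← Real.exp_add]
    norm_num
    ring
  simp only [gaussianPDFReal]
  rw [mul_assoc, h]
  ring

lemma integral_exp_mul_gauss (t : ℝ) :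
    ∫ x, Real.exp (t * x) ∂gaussianReal 0 1 = Real.exp (t ^ 2 / 2) := by
  rw [gaussianReal_of_var_ne_zero 0 one_ne_zero,
    show gaussianPDF 0 1 = fun x => ((Real.toNNReal (gaussianPDFReal 0 1 x) : ℝ≥0) : ℝ≥0∞) from rfl,
    integral_withDensity_eq_integral_smul ((measurable_gaussianPDFReal 0 1).real_toNNReal)]
  have : ∀ x : ℝ, (Real.toNNReal (gaussianPDFReal 0 1 x)) • Real.exp (t * x)
      = Real.exp (t ^ 2 / 2) * gaussianPDFReal t 1 x := by
    intro x
    rw [NNReal.smul_def, smul_eq_mul, Real.coe_toNNReal _ (gaussianPDFReal_nonneg 0 1 x),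
      gaussPDF_mul_exp]
  simp_rw [this]
  rw [MeasureTheory.integral_const_mul, integral_gaussianPDFReal_eq_one t one_ne_zero, mul_one]

lemma integrable_exp_mul_gauss (t : ℝ) :
    Integrable (fun x => Real.exp (t * x)) (gaussianReal 0 1) := by
  rw [gaussianReal_of_var_ne_zero 0 one_ne_zero,
    show gaussianPDF 0 1 = fun x => ((Real.toNNReal (gaussianPDFReal 0 1 x) : ℝ≥0) : ℝ≥0∞) from rfl,
    integrable_withDensity_iff_integrable_smul ((measurable_gaussianPDFReal 0 1).real_toNNReal)]
  have : (fun x : ℝ => (Real.toNNReal (gaussianPDFReal 0 1 x)) • Real.exp (t * x))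
      = fun x => Real.exp (t ^ 2 / 2) * gaussianPDFReal t 1 x := by
    funext x
    rw [NNReal.smul_def, smul_eq_mul, Real.coe_toNNReal _ (gaussianPDFReal_nonneg 0 1 x),
      gaussPDF_mul_exp]
  rw [this]
  exact (integrable_gaussianPDFReal t 1).const_mul _

lemma prod_ite_eval {ι α : Type*} [Fintype ι] [DecidableEq ι] (i : ι) (g : α → ℝ) (ω : ι → α) :
    ∏ j, (if j = i then g (ω j) else 1) = g (ω i) := by
  rw [Finset.prod_ite_eq' Finset.univ i (fun j => g (ω j))]
  simp

lemma integrable_eval {ι α : Type*} [Fintype ι] [DecidableEq ι] [MeasurableSpace α]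
    (μ : Measure α) [IsProbabilityMeasure μ] (i : ι) (g : α → ℝ) (hg : Integrable g μ) :
    Integrable (fun ω : ι → α => g (ω i)) (Measure.pi fun _ => μ) := by
  letI : MeasureSpace α := ⟨μ⟩
  haveI : SigmaFinite (volume : Measure α) := inferInstanceAs (SigmaFinite μ)
  have : (fun ω : ι → α => g (ω i))
      = fun ω : ι → α => ∏ j, (fun j a => if j = i then g a else 1) j (ω j) := by
    funext ω
    exact (prod_ite_eval i g ω).symm
  rw [this, show (Measure.pi fun _ : ι => μ) = (volume : Measure (ι → α)) from rfl]
  exact Integrable.fintype_prod (𝕜 := ℝ) (f := fun j a => if j = i then g a else 1)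
    (fun j => by
      by_cases h : j = i
      · subst h; simp only [if_pos rfl]; exact hg
      · simp [h])

lemma integral_eval {ι α : Type*} [Fintype ι] [DecidableEq ι] [MeasurableSpace α]
    (μ : Measure α) [IsProbabilityMeasure μ] (i : ι) (g : α → ℝ) :
    ∫ ω : ι → α, g (ω i) ∂(Measure.pi fun _ => μ) = ∫ x, g x ∂μ := by
  letI : MeasureSpace α := ⟨μ⟩
  haveI : SigmaFinite (volume : Measure α) := inferInstanceAs (SigmaFinite μ)
  have : (fun ω : ι → α => g (ω i))
      = fun ω : ι → α => ∏ j, (fun j a => if j = i then g a else 1) j (ω j) := by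
    funext ω
    exact (prod_ite_eval i g ω).symm
  rw [this, show (Measure.pi fun _ : ι => μ) = (volume : Measure (ι → α)) from rfl,
    MeasureTheory.integral_fintype_prod_volume_eq_prod (𝕜 := ℝ) (fun j a => if j = i then g a else 1)]
  rw [Finset.prod_eq_single i (fun j _ hj => by simp [hj]) (by simp)]
  simp
  rfl

lemma integral_exp_sum_gauss {ι : Type*} [Fintype ι] (a : ι → ℝ) :
    ∫ ω : ι → ℝ, Real.exp (∑ j, ω j * a j) ∂(Measure.pi fun _ => gaussianReal 0 1)
      = Real.exp (∑ j, a j ^ 2 / 2) := by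
  letI : MeasureSpace ℝ := ⟨gaussianReal 0 1⟩
  haveI : SigmaFinite (volume : Measure ℝ) := inferInstanceAs (SigmaFinite (gaussianReal 0 1))
  simp_rw [Real.exp_sum, mul_comm]
  rw [show (Measure.pi fun _ : ι => gaussianReal 0 1) = (volume : Measure (ι → ℝ)) from rfl,
    MeasureTheory.integral_fintype_prod_volume_eq_prod (𝕜 := ℝ) (fun j t => Real.exp (a j * t))]
  have h : ∀ j, (∫ t : ℝ, Real.exp (a j * t)) = Real.exp (a j ^ 2 / 2) := fun j =>
    integral_exp_mul_gauss (a j)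
  simp_rw [h]

lemma integrable_exp_sum_gauss {ι : Type*} [Fintype ι] (a : ι → ℝ) :
    Integrable (fun ω : ι → ℝ => Real.exp (∑ j, ω j * a j))
      (Measure.pi fun _ => gaussianReal 0 1) := by
  letI : MeasureSpace ℝ := ⟨gaussianReal 0 1⟩
  haveI : SigmaFinite (volume : Measure ℝ) := inferInstanceAs (SigmaFinite (gaussianReal 0 1))
  simp_rw [Real.exp_sum, mul_comm]
  rw [show (Measure.pi fun _ : ι => gaussianReal 0 1) = (volume : Measure (ι → ℝ)) from rfl]
  exact Integrable.fintype_prod (𝕜 := ℝ) fun j => integrable_exp_mul_gauss (a j)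

/-- The hyperbolic cosine random feature map (FAVOR+ with the antithetic trick):
with `r = 2m` features, `φ(z)` has, for each Gaussian sample `ωᵢ` (`i < m`), the two
coordinates `(1/√(2m)) exp(-‖z‖²/2) exp(±ωᵢᵀz)`. It is an unbiased estimator of the
softmax kernel: `E[φ(x)ᵀφ(y)] = exp(xᵀy)`. -/
theorem hyperbolic_favorPlus_unbiased (N m : ℕ) (hm : 0 < m) (x y : Fin N → ℝ) :
    ∫ ω : Fin m → Fin N → ℝ,
        ∑ p : Fin m × Bool,
          (1 / Real.sqrt (2 * m) * Real.exp (-(∑ j, x j ^ 2) / 2) *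
            Real.exp ((if p.2 then (1 : ℝ) else -1) * ∑ j, ω p.1 j * x j)) *
          (1 / Real.sqrt (2 * m) * Real.exp (-(∑ j, y j ^ 2) / 2) *
            Real.exp ((if p.2 then (1 : ℝ) else -1) * ∑ j, ω p.1 j * y j))
        ∂(Measure.pi fun _ : Fin m => Measure.pi fun _ : Fin N => gaussianReal 0 1) =
      Real.exp (∑ j, x j * y j) := by
  have hm' : (0:ℝ) < 2 * m := by positivity
  set C : ℝ := 1 / (2 * m) * Real.exp (-(∑ j, x j ^ 2) / 2) * Real.exp (-(∑ j, y j ^ 2) / 2)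
    with hC
  have h1 : (1:ℝ) / Real.sqrt (2 * m) * (1 / Real.sqrt (2 * m)) = 1 / (2 * m) := by
    rw [div_mul_div_comm, one_mul, Real.mul_self_sqrt hm'.le]
  have hterm : ∀ (ε : ℝ) (z : Fin N → ℝ),
      (1 / Real.sqrt (2 * m) * Real.exp (-(∑ j, x j ^ 2) / 2) *
          Real.exp (ε * ∑ j, z j * x j)) *
        (1 / Real.sqrt (2 * m) * Real.exp (-(∑ j, y j ^ 2) / 2) *
          Real.exp (ε * ∑ j, z j * y j)) =
      C * Real.exp (∑ j, z j * (ε * (x j + y j))) := by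
    intro ε z
    have hexp : ε * ∑ j, z j * x j + ε * ∑ j, z j * y j
        = ∑ j, z j * (ε * (x j + y j)) := by
      rw [Finset.mul_sum, Finset.mul_sum, ← Finset.sum_add_distrib]
      exact Finset.sum_congr rfl fun j _ => by ring
    calc (1 / Real.sqrt (2 * m) * Real.exp (-(∑ j, x j ^ 2) / 2) *
          Real.exp (ε * ∑ j, z j * x j)) *
        (1 / Real.sqrt (2 * m) * Real.exp (-(∑ j, y j ^ 2) / 2) *
          Real.exp (ε * ∑ j, z j * y j))
        = (1 / Real.sqrt (2 * m) * (1 / Real.sqrt (2 * m)) * Real.exp (-(∑ j, x j ^ 2) / 2) *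
            Real.exp (-(∑ j, y j ^ 2) / 2)) *
          (Real.exp (ε * ∑ j, z j * x j) * Real.exp (ε * ∑ j, z j * y j)) := by ring
      _ = C * Real.exp (∑ j, z j * (ε * (x j + y j))) := by
          rw [h1, ← Real.exp_add, hexp, hC]
  have hval : ∀ p : Fin m × Bool,
      ∫ ω : Fin m → Fin N → ℝ,
          (1 / Real.sqrt (2 * m) * Real.exp (-(∑ j, x j ^ 2) / 2) *
            Real.exp ((if p.2 then (1 : ℝ) else -1) * ∑ j, ω p.1 j * x j)) *
          (1 / Real.sqrt (2 * m) * Real.exp (-(∑ j, y j ^ 2) / 2) *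
            Real.exp ((if p.2 then (1 : ℝ) else -1) * ∑ j, ω p.1 j * y j))
          ∂(Measure.pi fun _ : Fin m => Measure.pi fun _ : Fin N => gaussianReal 0 1)
        = C * Real.exp (∑ j, (x j + y j) ^ 2 / 2) := by
    intro p
    simp_rw [hterm (if p.2 then (1:ℝ) else -1)]
    have e1 := integral_eval (ι := Fin m) (α := Fin N → ℝ)
      (Measure.pi fun _ : Fin N => gaussianReal 0 1) p.1
      (fun z => C * Real.exp (∑ j, z j * ((if p.2 then (1:ℝ) else -1) * (x j + y j))))
    rw [e1, MeasureTheory.integral_const_mul, integral_exp_sum_gauss]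
    congr 2
    refine Finset.sum_congr rfl fun j _ => ?_
    cases p.2 <;> simp <;> ring
  have hint : ∀ p : Fin m × Bool,
      Integrable (fun ω : Fin m → Fin N → ℝ =>
        (1 / Real.sqrt (2 * m) * Real.exp (-(∑ j, x j ^ 2) / 2) *
          Real.exp ((if p.2 then (1 : ℝ) else -1) * ∑ j, ω p.1 j * x j)) *
        (1 / Real.sqrt (2 * m) * Real.exp (-(∑ j, y j ^ 2) / 2) *
          Real.exp ((if p.2 then (1 : ℝ) else -1) * ∑ j, ω p.1 j * y j)))
        (Measure.pi fun _ : Fin m => Measure.pi fun _ : Fin N => gaussianReal 0 1) := by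
    intro p
    simp_rw [hterm (if p.2 then (1:ℝ) else -1)]
    have e2 := integrable_eval (ι := Fin m) (α := Fin N → ℝ)
      (Measure.pi fun _ : Fin N => gaussianReal 0 1) p.1
      (fun z => C * Real.exp (∑ j, z j * ((if p.2 then (1:ℝ) else -1) * (x j + y j))))
      ((integrable_exp_sum_gauss _).const_mul C)
    simpa using e2
  rw [MeasureTheory.integral_finset_sum Finset.univ (fun p _ => hint p)]
  simp_rw [hval]
  rw [Finset.sum_const, Finset.card_univ]
  have hcard : Fintype.card (Fin m × Bool) = 2 * m := by simp [Fintype.card_prod, mul_comm]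
  rw [hcard, nsmul_eq_mul, hC]
  have hsum : ∑ j, (x j + y j) ^ 2 / 2
      = (∑ j, x j ^ 2) / 2 + (∑ j, y j ^ 2) / 2 + ∑ j, x j * y j := by
    rw [Finset.sum_div, Finset.sum_div, ← Finset.sum_add_distrib, ← Finset.sum_add_distrib]
    exact Finset.sum_congr rfl fun j _ => by ring
  have h2m : ((2 * m : ℕ) : ℝ) = 2 * m := by push_cast; ring
  rw [h2m]
  have hE : rexp ((-∑ j, x j ^ 2) / 2) * rexp ((-∑ j, y j ^ 2) / 2) *
      rexp (∑ j, (x j + y j) ^ 2 / 2) = rexp (∑ j, x j * y j) := by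
    rw [← Real.exp_add, ← Real.exp_add, hsum]
    congr 1
    ring
  calc 2 * (m:ℝ) * (1 / (2 * ↑m) * rexp ((-∑ j, x j ^ 2) / 2) * rexp ((-∑ j, y j ^ 2) / 2) *
        rexp (∑ j, (x j + y j) ^ 2 / 2))
      = (2 * (m:ℝ) * (1 / (2 * ↑m))) * (rexp ((-∑ j, x j ^ 2) / 2) *
          rexp ((-∑ j, y j ^ 2) / 2) * rexp (∑ j, (x j + y j) ^ 2 / 2)) := by ring
    _ = rexp (∑ j, x j * y j) := by
        rw [hE, mul_one_div, div_self hm'.ne', one_mul]
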